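/- arXiv:1303.7349 — 2 statements merged into one kernel-verified Lean document; each statement's English description precedes it below -/
import Mathlib

section
/- For every δ > 1, every real number a ≥ 0, and every k ∈ ℕ (including k = 0), one has ∑_{i=k}^∞ (a_{δ,i})² ≥ c(δ) ((a − δ^{k/2})⁺)². -/
lemma aux_trunc (s : ℝ) (hs : 1 < s) (a : ℝ) (ha : 0 ≤ a) (k : ℕ) :
    ((s - 1) / s ^ 2) ^ 2 * max (a - s ^ k) 0 ^ 2
      ≤ ∑' i : ℕ, (min (max (a - s ^ (k + i)) 0) (s ^ (k + i + 1) - s ^ (k + i))) ^ 2 := by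
  have hs0 : (0:ℝ) < s := lt_trans one_pos hs
  set f : ℕ → ℝ := fun i => (min (max (a - s ^ (k + i)) 0) (s ^ (k + i + 1) - s ^ (k + i))) ^ 2
    with hf
  have hnonneg : ∀ i, 0 ≤ f i := fun i => sq_nonneg _
  obtain ⟨N, hN⟩ : ∃ N, a < s ^ N := pow_unbounded_of_one_lt a hs
  have hzero : ∀ i, N ≤ k + i → f i = 0 := by
    intro i hi
    have h1 : a ≤ s ^ (k+i) := le_trans hN.le (pow_le_pow_right₀ hs.le hi)
    have h2 : max (a - s ^ (k+i)) 0 = 0 := max_eq_right (by linarith)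
    have h3 : s ^ (k+i) ≤ s ^ (k+i+1) := pow_le_pow_right₀ hs.le (by omega)
    simp [hf, h2, min_eq_left, sub_nonneg.mpr h3]
  have hsum : Summable f := summable_of_ne_finset_zero (s := Finset.range N)
    (fun i hi => hzero i (by simp at hi; omega))
  by_cases hak : a ≤ s ^ k
  · have hmx : max (a - s ^ k) 0 = 0 := max_eq_right (by linarith)
    rw [hmx]
    simpa using tsum_nonneg hnonneg
  push_neg at hak
  classical
  have hex : ∃ m, a ≤ s ^ m := ⟨N, hN.le⟩
  have hM : a ≤ s ^ (Nat.find hex) := Nat.find_spec hex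
  have hkM : k < Nat.find hex := by
    by_contra h
    push_neg at h
    exact absurd (le_trans hM (pow_le_pow_right₀ hs.le h)) (not_le.mpr hak)
  obtain ⟨n, hMn⟩ : ∃ n, Nat.find hex = n + 1 := ⟨Nat.find hex - 1, by omega⟩
  have hlow : s ^ n < a := by
    have := Nat.find_min hex (m := n) (by omega)
    push_neg at this; exact this
  have hup : a ≤ s ^ (n + 1) := by rw [← hMn]; exact hM
  have hkn : k ≤ n := by omega
  have hmax : max (a - s ^ k) 0 = a - s ^ k := max_eq_left (by linarith)
  rw [hmax]
  rcases eq_or_lt_of_le hkn with heq | hlt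
  · -- n = k : use term i = 0
    have hterm : (a - s ^ k) ^ 2 ≤ f 0 := by
      have h1 : max (a - s ^ (k + 0)) 0 = a - s ^ k := by
        rw [add_zero]; exact max_eq_left (by linarith)
      have h2 : a - s ^ k ≤ s ^ (k + 0 + 1) - s ^ (k + 0) := by
        rw [add_zero]
        have : a ≤ s ^ (k+1) := by rw [heq]; exact hup
        linarith
      simp only [hf]
      rw [h1, min_eq_left h2]
    have hc1 : ((s - 1) / s ^ 2) ^ 2 ≤ 1 := by
      have h0 : (0:ℝ) ≤ (s-1)/s^2 := div_nonneg (by linarith) (by positivity)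
      have h1 : (s-1)/s^2 ≤ 1 := by
        rw [div_le_one (by positivity)]; nlinarith
      nlinarith
    calc ((s - 1) / s ^ 2) ^ 2 * (a - s ^ k) ^ 2
        ≤ 1 * (a - s ^ k) ^ 2 := mul_le_mul_of_nonneg_right hc1 (sq_nonneg _)
      _ = (a - s ^ k) ^ 2 := one_mul _
      _ ≤ f 0 := hterm
      _ ≤ ∑' i, f i := Summable.le_tsum hsum 0 (fun j _ => hnonneg j)
  · -- k < n : use term i = m - k where n = m + 1
    obtain ⟨m, rfl⟩ : ∃ m, n = m + 1 := ⟨n - 1, by omega⟩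
    have hkm : k ≤ m := by omega
    have hterm : (s ^ (m+1) - s ^ m) ^ 2 ≤ f (m - k) := by
      have hkmk : k + (m - k) = m := by omega
      have hsm : s ^ m < s ^ (m+1) := pow_lt_pow_right₀ hs (by omega)
      have hge : s ^ (m+1) - s ^ m ≤ max (a - s ^ m) 0 := by
        rw [max_eq_left (by nlinarith)]
        nlinarith
      simp only [hf, hkmk]
      rw [min_eq_right (le_trans (by nlinarith) hge)]
    have hble : a - s ^ k ≤ s ^ m * s ^ 2 := by
      have : s ^ (m + 1 + 1) = s ^ m * s ^ 2 := by ring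
      have hk0 : (0:ℝ) < s ^ k := by positivity
      nlinarith
    have h1 : (a - s ^ k) ^ 2 ≤ (s ^ m * s ^ 2) ^ 2 :=
      pow_le_pow_left₀ (by linarith) hble 2
    have h2 : ((s - 1) / s ^ 2) ^ 2 * (s ^ m * s ^ 2) ^ 2 = (s ^ (m+1) - s ^ m) ^ 2 := by
      have hs2 : s ^ 2 ≠ 0 := by positivity
      field_simp
      ring
    calc ((s - 1) / s ^ 2) ^ 2 * (a - s ^ k) ^ 2
        ≤ ((s - 1) / s ^ 2) ^ 2 * (s ^ m * s ^ 2) ^ 2 :=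
          mul_le_mul_of_nonneg_left h1 (sq_nonneg _)
      _ = (s ^ (m+1) - s ^ m) ^ 2 := h2
      _ ≤ f (m - k) := hterm
      _ ≤ ∑' i, f i := Summable.le_tsum hsum _ (fun j _ => hnonneg j)



/-- Lemma 2.6: for δ > 1, a ≥ 0 and k ∈ ℕ,
`∑_{i=k}^∞ (a_{δ,i})² ≥ c(δ) ((a − δ^{k/2})⁺)²` where
`a_{δ,i} = min((a − δ^{i/2})⁺, δ^{(i+1)/2} − δ^{i/2})` and `c(δ) = ((√δ − 1)/δ)²`. -/
theorem truncation_sum_lower_bound (δ : ℝ) (hδ : 1 < δ) (a : ℝ) (ha : 0 ≤ a) (k : ℕ) :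
    ((Real.sqrt δ - 1) / δ) ^ 2 * max (a - δ ^ ((k : ℝ) / 2)) 0 ^ 2
      ≤ ∑' i : ℕ,
          (min (max (a - δ ^ ((((k + i : ℕ) : ℝ)) / 2)) 0)
            (δ ^ ((((k + i : ℕ) : ℝ) + 1) / 2) - δ ^ ((((k + i : ℕ) : ℝ)) / 2))) ^ 2 := by
  have hδ0 : (0:ℝ) < δ := lt_trans one_pos hδ
  have hs : 1 < Real.sqrt δ := by
    rw [show (1:ℝ) = Real.sqrt 1 by simp]
    exact Real.sqrt_lt_sqrt zero_le_one hδ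
  have hpow : ∀ m : ℕ, δ ^ ((m : ℝ) / 2) = Real.sqrt δ ^ m := by
    intro m
    rw [Real.sqrt_eq_rpow, ← Real.rpow_natCast (δ ^ ((1:ℝ)/2)) m, ← Real.rpow_mul hδ0.le]
    ring_nf
  have e1 : ∀ m : ℕ, δ ^ (((m:ℝ) + 1) / 2) = Real.sqrt δ ^ (m + 1) := by
    intro m
    rw [show ((m:ℝ) + 1) / 2 = (((m+1:ℕ):ℝ))/2 by push_cast; ring, hpow]
  have hδs : δ = Real.sqrt δ ^ 2 := (Real.sq_sqrt hδ0.le).symm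
  have h := aux_trunc (Real.sqrt δ) hs a ha k
  simp only [hpow, e1]
  rw [← hδs] at h
  exact h
end

section
/- Suppose the super Poincaré inequality holds for ℰ with rate β. Let n ≥ 1 be an integer and r > 0 such that β(r) · μ(ρ > n−1) ≤ 1/2. Then every f ∈ 𝒜 vanishing on the set {ρ ≤ n−1} satisfies μ(f²) ≤ 2 r ℰ(f). -/
open MeasureTheory Filter
open scoped ENNReal

/-- Equation (2.6): the super Poincaré inequality localized to functions vanishing near o. -/
theorem superPoincare_vanishing_near_origin
    {E : Type*} [MetricSpace E] [MeasurableSpace E] [BorelSpace E] [Nonempty E]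
    (μ : MeasureTheory.Measure E) [MeasureTheory.IsProbabilityMeasure μ]
    (q : E → E → ℝ)
    (hq_nonneg : ∀ x y, 0 ≤ q x y)
    (hq_diag : ∀ x, q x x = 0)
    (hq_meas : Measurable (Function.uncurry q))
    (l : ℝ) (hl_nonneg : 0 ≤ l)
    (hl : ∀ x, ∫ y, min 1 (dist x y ^ 2) * q x y ∂μ ≤ l)
    (Γ : (E → ℝ) → E → ℝ)
    (hΓ : ∀ f x, Γ f x = ∫ y, (f x - f y) ^ 2 * q x y ∂μ)
    (A : Set (E → ℝ))
    (hA : ∀ f, f ∈ A ↔ Measurable f ∧ (∃ M, ∀ x, |f x| ≤ M) ∧ ∃ M, ∀ x, Γ f x ≤ M)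
    (En : (E → ℝ) → ℝ)
    (hEn : ∀ f, En f = ∫ x, Γ f x ∂μ)
    (o : E)
    (β : ℝ → ℝ)
    (hβ_pos : ∀ r, 0 < r → 0 < β r)
    (hβ_dec : ∀ r s, 0 < r → r ≤ s → β s ≤ β r)
    (hSP : ∀ r, 0 < r → ∀ f ∈ A,
      ∫ x, f x ^ 2 ∂μ ≤ r * En f + β r * (∫ x, |f x| ∂μ) ^ 2)
    :
    ∀ n : ℕ, 1 ≤ n → ∀ r : ℝ, 0 < r →
    β r * (μ {x | (n : ℝ) - 1 < dist o x}).toReal ≤ 1 / 2 →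
    ∀ f ∈ A, (∀ x, dist o x ≤ (n : ℝ) - 1 → f x = 0) →
      ∫ x, f x ^ 2 ∂μ ≤ 2 * r * En f := by
  intro n hn r hr hhalf f hfA hfvan
  obtain ⟨hf_meas, ⟨M, hM⟩, -⟩ := (hA f).mp hfA
  set S : Set E := {x | (n : ℝ) - 1 < dist o x} with hS
  have hS_meas : MeasurableSet S := by
    have : S = (fun x => dist o x) ⁻¹' (Set.Ioi ((n : ℝ) - 1)) := rfl
    rw [this]
    exact measurableSet_preimage (continuous_const.dist continuous_id).measurable measurableSet_Ioi
  -- f squared is integrable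
  have hf2_int : Integrable (fun x => f x ^ 2) μ := by
    refine ⟨((hf_meas.pow_const 2).aestronglyMeasurable), ?_⟩
    apply HasFiniteIntegral.of_bounded (C := M ^ 2)
    filter_upwards with x
    simp only [Real.norm_eq_abs, abs_pow]
    exact pow_le_pow_left₀ (abs_nonneg _) (hM x) 2
  have hf2_nonneg : (0 : ℝ) ≤ ∫ x, f x ^ 2 ∂μ :=
    integral_nonneg fun x => sq_nonneg _
  -- Cauchy-Schwarz: (∫ |f|)^2 ≤ μ(S) * ∫ f^2
  have hCS : (∫ x, |f x| ∂μ) ^ 2 ≤ (μ S).toReal * ∫ x, f x ^ 2 ∂μ := by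
    have hpq : Real.HolderConjugate 2 2 := Real.HolderConjugate.two_two
    have hind : ∀ x, |f x| = S.indicator (fun _ => (1 : ℝ)) x * |f x| := by
      intro x
      by_cases hx : x ∈ S
      · rw [Set.indicator_of_mem hx]; ring
      · rw [Set.indicator_of_notMem hx, zero_mul]
        have : dist o x ≤ (n : ℝ) - 1 := le_of_not_gt hx
        rw [hfvan x this, abs_zero]
    have hmemI : MemLp (S.indicator (fun _ => (1 : ℝ))) (ENNReal.ofReal 2) μ := by
      refine (memLp_top_of_bound ?_ 1 ?_).mono_exponent le_top
      · exact ((measurable_const.indicator hS_meas)).aestronglyMeasurable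
      · filter_upwards with x
        by_cases hx : x ∈ S
        · rw [Set.indicator_of_mem hx]; simp
        · rw [Set.indicator_of_notMem hx]; simp
    have hmemF : MemLp (fun x => |f x|) (ENNReal.ofReal 2) μ := by
      refine (memLp_top_of_bound ?_ M ?_).mono_exponent le_top
      · exact hf_meas.abs.aestronglyMeasurable
      · filter_upwards with x
        simpa using hM x
    have hH := integral_mul_le_Lp_mul_Lq_of_nonneg hpq
      (Filter.Eventually.of_forall fun x => Set.indicator_nonneg (fun _ _ => zero_le_one) x)
      (Filter.Eventually.of_forall fun x => abs_nonneg (f x)) hmemI hmemF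
    have hleft : ∫ x, S.indicator (fun _ => (1 : ℝ)) x * |f x| ∂μ = ∫ x, |f x| ∂μ := by
      congr 1; funext x; rw [← hind x]
    have hI2 : ∫ x, S.indicator (fun _ => (1 : ℝ)) x ^ (2 : ℝ) ∂μ = (μ S).toReal := by
      have : ∀ x, S.indicator (fun _ => (1 : ℝ)) x ^ (2 : ℝ) =
          S.indicator (fun _ => (1 : ℝ)) x := by
        intro x
        by_cases hx : x ∈ S
        · rw [Set.indicator_of_mem hx]; simp
        · rw [Set.indicator_of_notMem hx]
          simp [Real.zero_rpow (by norm_num : (2 : ℝ) ≠ 0)]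
      rw [integral_congr_ae (Filter.Eventually.of_forall this)]
      exact integral_indicator_one hS_meas
    have hF2 : ∫ x, |f x| ^ (2 : ℝ) ∂μ = ∫ x, f x ^ 2 ∂μ := by
      congr 1; funext x
      rw [show ((2 : ℝ)) = ((2 : ℕ) : ℝ) by norm_num, Real.rpow_natCast, sq_abs]
    rw [hleft, hI2, hF2] at hH
    -- hH : ∫ |f| ≤ (μ S).toReal ^ (1/2) * (∫ f^2) ^ (1/2)
    have habs_nonneg : (0 : ℝ) ≤ ∫ x, |f x| ∂μ := integral_nonneg fun x => abs_nonneg _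
    have hA_nonneg : (0 : ℝ) ≤ (μ S).toReal := ENNReal.toReal_nonneg
    calc (∫ x, |f x| ∂μ) ^ 2
        ≤ ((μ S).toReal ^ (1 / 2 : ℝ) * (∫ x, f x ^ 2 ∂μ) ^ (1 / 2 : ℝ)) ^ 2 := by
          apply pow_le_pow_left₀ habs_nonneg hH 2
      _ = (μ S).toReal * ∫ x, f x ^ 2 ∂μ := by
          rw [mul_pow, ← Real.rpow_natCast ((μ S).toReal ^ (1 / 2 : ℝ)) 2,
            ← Real.rpow_natCast ((∫ x, f x ^ 2 ∂μ) ^ (1 / 2 : ℝ)) 2,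
            ← Real.rpow_mul hA_nonneg, ← Real.rpow_mul hf2_nonneg]
          norm_num
  have hβr : 0 < β r := hβ_pos r hr
  have hkey := hSP r hr f hfA
  have hstep : β r * (∫ x, |f x| ∂μ) ^ 2 ≤ (1 / 2) * ∫ x, f x ^ 2 ∂μ := by
    calc β r * (∫ x, |f x| ∂μ) ^ 2
        ≤ β r * ((μ S).toReal * ∫ x, f x ^ 2 ∂μ) := by
          exact mul_le_mul_of_nonneg_left hCS hβr.le
      _ = (β r * (μ S).toReal) * ∫ x, f x ^ 2 ∂μ := by ring
      _ ≤ (1 / 2) * ∫ x, f x ^ 2 ∂μ := mul_le_mul_of_nonneg_right hhalf hf2_nonneg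
  linarith
end
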